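/- arXiv:2305.04012 — 4 statements merged into one kernel-verified Lean document; each statement's English description precedes it below -/
import Mathlib

section
/- In L, for any m ∈ ℕ₊ and any infinite subset {n_k : k ∈ ℕ₊} of ℕ₊, the set {x_{m,n_k} : k ∈ ℕ₊} has x_{m,ω} as its unique upper bound in L; in particular ⋁_{k} x_{m,n_k} = x_{m,ω}. -/
/-- Nonempty finite sequences of positive naturals. -/
abbrev FinSeq := {l : List ℕ+ // l ≠ []}

/-- `Sig` : nonempty finite or countably infinite sequences of positive naturals. -/
abbrev Sig := FinSeq ⊕ (ℕ → ℕ+)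

/-- The substring (prefix) order on `Sig`. -/
def sigLE : Sig → Sig → Prop
  | Sum.inl a, Sum.inl b => a.val <+: b.val
  | Sum.inl a, Sum.inr f => ∀ i : Fin a.val.length, a.val.get i = f i.val
  | Sum.inr f, Sum.inr g => f = g
  | Sum.inr _, Sum.inl _ => False

/-- A subset `D` is directed w.r.t. relation `r`. -/
def DirectedSet {A : Type _} (r : A → A → Prop) (D : Set A) : Prop :=
  D.Nonempty ∧ ∀ a ∈ D, ∀ b ∈ D, ∃ c ∈ D, r a c ∧ r b c

/-- `s` is the supremum (least upper bound) of `D` w.r.t. `r`. -/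
def IsSupOf {A : Type _} (r : A → A → Prop) (D : Set A) (s : A) : Prop :=
  (∀ a ∈ D, r a s) ∧ ∀ u, (∀ a ∈ D, r a u) → r s u

/-- `c` is a compact element w.r.t. `r`. -/
def IsCompactEl {A : Type _} (r : A → A → Prop) (c : A) : Prop :=
  ∀ D s, DirectedSet r D → IsSupOf r D s → r c s → ∃ d ∈ D, r c d

/-- `x` is maximal w.r.t. `r`. -/
def IsMaximalEl {A : Type _} (r : A → A → Prop) (x : A) : Prop :=
  ∀ y, r x y → y = x

/-- `U` is Scott open w.r.t. `r`. -/
def ScottOpen {A : Type _} (r : A → A → Prop) (U : Set A) : Prop :=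
  (∀ x ∈ U, ∀ y, r x y → y ∈ U) ∧
  ∀ D s, DirectedSet r D → IsSupOf r D s → s ∈ U → ∃ d ∈ D, d ∈ U

/-- The poset `X`: pairs `x_{m,n}` with `m ∈ ℕ₊`, `n ∈ ℕ₊ ∪ {ω}` (`ω = ⊤`). -/
abbrev XP := ℕ+ × WithTop ℕ+

/-- Order on `X`: `x_{m₁,n₁} ≤ x_{m₂,n₂}` iff `m₁ = m₂` and `n₁ ≤ n₂`. -/
def xLE : XP → XP → Prop := fun a b => a.1 = b.1 ∧ a.2 ≤ b.2

/-- The carrier of `L = X ∪ Σ ∪ Σ*`. -/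
abbrev LP := XP ⊕ (Sig ⊕ Sig)

def toX (p : XP) : LP := Sum.inl p
/-- The copy `Σ` inside `L`. -/
def toS (a : Sig) : LP := Sum.inr (Sum.inl a)
/-- The copy `Σ*` inside `L`. -/
def toS' (a : Sig) : LP := Sum.inr (Sum.inr a)

/-- Underlying sequence of an element of `Σ ∪ Σ*`. -/
def sigOf : Sig ⊕ Sig → Sig := Sum.elim id id

/-- `entryGE v k m` : the length of `v` is `≥ k+1` and its `(k+1)`-th entry is `≥ m`
(0-based index `k`). -/
def entryGE : Sig → ℕ → ℕ+ → Prop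
  | Sum.inl l, k, m => ∃ h : k < l.val.length, m ≤ l.val.get ⟨k, h⟩
  | Sum.inr f, k, m => m ≤ f k

/-- The order on `L`. -/
def lLE : LP → LP → Prop
  | Sum.inl x, Sum.inl y => xLE x y
  | Sum.inl x, Sum.inr w =>
      ∃ m : ℕ+, x.2 = (m : WithTop ℕ+) ∧ entryGE (sigOf w) x.1.natPred m
  | Sum.inr (Sum.inl a), Sum.inr w => sigLE a (sigOf w)
  | Sum.inr (Sum.inr a), Sum.inr (Sum.inr b) => sigLE a b
  | Sum.inr (Sum.inr _), Sum.inr (Sum.inl _) => False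
  | Sum.inr _, Sum.inl _ => False

theorem stmt11 (m : ℕ+) (S : Set ℕ+) (hS : S.Infinite) :
    (∀ u : LP,
      (∀ n ∈ S, lLE (toX (m, (n : WithTop ℕ+))) u) ↔ u = toX (m, ⊤)) ∧
    IsSupOf lLE {u : LP | ∃ n ∈ S, u = toX (m, (n : WithTop ℕ+))} (toX (m, ⊤)) := by
  have hgt : ∀ b : ℕ+, ∃ n ∈ S, b < n := fun b => hS.exists_gt b
  have key : ∀ u : LP,
      (∀ n ∈ S, lLE (toX (m, (n : WithTop ℕ+))) u) ↔ u = toX (m, ⊤) := by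
    intro u
    constructor
    · intro h
      match u with
      | Sum.inl (m', n') =>
        have hne : S.Nonempty := hS.nonempty
        obtain ⟨n0, hn0⟩ := hne
        have h0 := h n0 hn0
        have hm : m = m' := h0.1
        have hn' : n' = ⊤ := by
          rcases n' with _ | b
          · rfl
          · exfalso
            obtain ⟨n, hn, hbn⟩ := hgt b
            have h2 : (n : WithTop ℕ+) ≤ (b : WithTop ℕ+) := (h n hn).2
            have hle : n ≤ b := by exact_mod_cast h2
            exact absurd hbn (not_lt.mpr hle)
        subst hn'
        simp [toX, hm]
      | Sum.inr w =>
        exfalso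
        have hE : ∀ n ∈ S, entryGE (sigOf w) m.natPred n := by
          intro n hn
          obtain ⟨m', hm', hE⟩ := h n hn
          have : (n : WithTop ℕ+) = (m' : WithTop ℕ+) := hm'
          have : n = m' := by exact_mod_cast this
          exact this ▸ hE
        cases hs : sigOf w with
        | inl l =>
          by_cases hk : m.natPred < l.val.length
          · obtain ⟨n, hn, hbn⟩ := hgt (l.val.get ⟨m.natPred, hk⟩)
            obtain ⟨_, hle⟩ := hs ▸ hE n hn
            exact absurd hbn (not_lt.mpr hle)
          · obtain ⟨n, hn⟩ := hS.nonempty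
            obtain ⟨h', _⟩ := hs ▸ hE n hn
            exact hk h'
        | inr f =>
          obtain ⟨n, hn, hbn⟩ := hgt (f m.natPred)
          have hle := hs ▸ hE n hn
          exact absurd hbn (not_lt.mpr hle)
    · rintro rfl n hn
      exact ⟨rfl, le_top⟩
  refine ⟨key, ⟨?_, ?_⟩⟩
  · rintro a ⟨n, hn, rfl⟩
    exact ⟨rfl, le_top⟩
  · intro u hu
    have := (key u).mp (fun n hn => hu _ ⟨n, hn, rfl⟩)
    subst this
    exact ⟨rfl, le_rfl⟩
end

section
/- The poset L is a dcpo: every directed subset of L has a supremum in L. -/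
lemma sigLE_refl (a : Sig) : sigLE a a := by
  cases a
  · exact List.prefix_refl _
  · rfl

lemma sigLE_antisymm {a b : Sig} (h1 : sigLE a b) (h2 : sigLE b a) : a = b := by
  cases a <;> cases b
  · exact congrArg Sum.inl (Subtype.ext (List.IsPrefix.eq_of_length_le h1 h2.length_le))
  · exact h2.elim
  · exact h1.elim
  · exact congrArg Sum.inr h1

lemma entryGE_mono {a b : Sig} (h : sigLE a b) {k : ℕ} {m : ℕ+} (ha : entryGE a k m) :
    entryGE b k m := by
  cases a <;> cases b
  case inl.inl l l' =>
    obtain ⟨hk, hm⟩ := ha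
    refine ⟨hk.trans_le h.length_le, ?_⟩
    have := h.getElem hk
    simp only [List.get_eq_getElem] at hm ⊢
    rw [← this]; exact hm
  case inl.inr l f =>
    obtain ⟨hk, hm⟩ := ha
    have := h ⟨k, hk⟩
    show m ≤ f k
    exact this ▸ hm
  case inr.inl => exact h.elim
  case inr.inr => exact h ▸ ha

lemma lLE_toS_inr (a : Sig) (w : Sig ⊕ Sig) :
    lLE (Sum.inr (Sum.inl a)) (Sum.inr w) ↔ sigLE a (sigOf w) := by
  cases w <;> exact Iff.rfl

lemma lLE_inl_inr (p : XP) (w : Sig ⊕ Sig) :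
    lLE (Sum.inl p) (Sum.inr w) ↔ ∃ m : ℕ+, p.2 = (m : WithTop ℕ+) ∧ entryGE (sigOf w) p.1.natPred m := by
  cases w <;> exact Iff.rfl

lemma seq_le_elim {s : Sig ⊕ Sig} {c : LP} (h : lLE (Sum.inr s) c) :
    ∃ w, c = Sum.inr w ∧ sigLE (sigOf s) (sigOf w) := by
  cases s <;> cases c
  · exact h.elim
  case inl.inr a w => exact ⟨w, rfl, (lLE_toS_inr a w).mp h⟩
  · exact h.elim
  case inr.inr a w =>
    cases w
    · exact h.elim
    case inr b => exact ⟨Sum.inr b, rfl, h⟩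

lemma toS'_le_elim {a : Sig} {c : LP} (h : lLE (Sum.inr (Sum.inr a)) c) :
    ∃ b, c = Sum.inr (Sum.inr b) ∧ sigLE a b := by
  cases c
  · exact h.elim
  case inr w =>
    cases w
    · exact h.elim
    case inr b => exact ⟨b, rfl, h⟩

lemma entryGE_bound (g : Sig) (k : ℕ) (h0 : ∃ m0, entryGE g k m0) :
    ∃ V : ℕ+, ∀ m, entryGE g k m → m ≤ V := by
  cases g
  case inl l =>
    obtain ⟨m0, hk, _⟩ := h0
    exact ⟨l.val.get ⟨k, hk⟩, fun m hm => hm.2⟩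
  case inr f => exact ⟨f k, fun m hm => hm⟩

lemma sup_of_X (D : Set LP) (hne : D.Nonempty)
    (hdir : ∀ a ∈ D, ∀ b ∈ D, ∃ c ∈ D, lLE a c ∧ lLE b c)
    (hX : ∀ d ∈ D, ∃ p : XP, d = Sum.inl p) :
    ∃ s, IsSupOf lLE D s := by
  classical
  obtain ⟨d0, hd0⟩ := hne
  obtain ⟨⟨k, n0⟩, rfl⟩ := hX d0 hd0
  have hk : ∀ d ∈ D, ∃ n, d = Sum.inl (k, n) := by
    intro d hd
    obtain ⟨⟨k', n⟩, rfl⟩ := hX d hd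
    obtain ⟨c, hc, h1, h2⟩ := hdir _ hd _ hd0
    obtain ⟨⟨k'', n''⟩, rfl⟩ := hX c hc
    have e1 : k' = k'' := h1.1
    have e2 : k = k'' := h2.1
    exact ⟨n, by rw [e1, ← e2]⟩
  by_cases htop : Sum.inl (k, (⊤ : WithTop ℕ+)) ∈ D
  · refine ⟨Sum.inl (k, ⊤), ?_, fun u hu => hu _ htop⟩
    intro d hd
    obtain ⟨n, rfl⟩ := hk d hd
    exact ⟨rfl, le_top⟩
  by_cases hbd : ∃ m : ℕ+, ∀ d ∈ D, lLE d (Sum.inl (k, (m : WithTop ℕ+)))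
  · obtain ⟨m, hm⟩ := hbd
    set S : Set ℕ := {n : ℕ | ∃ p : ℕ+, Sum.inl (k, (p : WithTop ℕ+)) ∈ D ∧ (p : ℕ) = n} with hS
    have hSne : S.Nonempty := by
      rcases n0 with _ | p0
      · exact absurd hd0 htop
      · exact ⟨(p0 : ℕ), p0, hd0, rfl⟩
    have hSbdd : ∀ n ∈ S, n ≤ (m : ℕ) := by
      rintro n ⟨p, hp, rfl⟩
      have h2 : (p : WithTop ℕ+) ≤ (m : WithTop ℕ+) := (hm _ hp).2
      exact_mod_cast h2
    have hmem : sSup S ∈ S := Nat.sSup_mem hSne ⟨(m : ℕ), hSbdd⟩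
    obtain ⟨p, hpD, hp⟩ := hmem
    refine ⟨Sum.inl (k, (p : WithTop ℕ+)), ?_, fun u hu => hu _ hpD⟩
    intro d hd
    obtain ⟨n, rfl⟩ := hk d hd
    rcases n with _ | q
    · exact absurd hd htop
    · refine ⟨rfl, ?_⟩
      have hq : (q : ℕ) ∈ S := ⟨q, hd, rfl⟩
      have hle : (q : ℕ) ≤ (p : ℕ) := hp ▸ le_csSup ⟨(m : ℕ), fun x hx => hSbdd x hx⟩ hq
      show (q : WithTop ℕ+) ≤ (p : WithTop ℕ+)
      exact_mod_cast hle
  · push_neg at hbd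
    refine ⟨Sum.inl (k, ⊤), ?_, ?_⟩
    · intro d hd; obtain ⟨n, rfl⟩ := hk d hd; exact ⟨rfl, le_top⟩
    · intro u hu
      cases u with
      | inl p' =>
        obtain ⟨k', n'⟩ := p'
        have hkk : k = k' := (hu _ hd0).1
        rcases n' with _ | m'
        · exact ⟨hkk, le_rfl⟩
        · exfalso
          obtain ⟨d, hd, hnd⟩ := hbd m'
          apply hnd
          have := hu d hd
          rwa [← hkk] at this
      | inr w =>
        exfalso
        obtain ⟨m0, hn0, hge0⟩ := (lLE_inl_inr _ _).mp (hu _ hd0)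
        obtain ⟨V, hV⟩ := entryGE_bound (sigOf w) ((k, n0).1.natPred) ⟨m0, hge0⟩
        obtain ⟨d, hd, hnd⟩ := hbd V
        obtain ⟨n, rfl⟩ := hk d hd
        obtain ⟨q, hq, hgeq⟩ := (lLE_inl_inr _ _).mp (hu _ hd)
        have hqV : q ≤ V := hV q hgeq
        refine hnd ⟨rfl, ?_⟩
        rw [hq]
        show (q : WithTop ℕ+) ≤ (V : WithTop ℕ+)
        exact_mod_cast hqV

lemma sigLE_trans {a b c : Sig} (h1 : sigLE a b) (h2 : sigLE b c) : sigLE a c := by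
  cases a <;> cases b <;> cases c
  case inl.inl.inl => exact List.IsPrefix.trans h1 h2
  case inl.inl.inr la lb f =>
    intro i
    have hi : i.val < lb.val.length := i.isLt.trans_le h1.length_le
    have h2' := h2 ⟨i.val, hi⟩
    simp only [List.get_eq_getElem] at h2' ⊢
    rw [h1.getElem i.isLt]
    exact h2'
  case inl.inr.inl => exact h2.elim
  case inl.inr.inr la f g =>
    have h2' : f = g := h2
    intro i
    rw [← h2']
    exact h1 i
  case inr.inl.inl => exact h1.elim
  case inr.inl.inr => exact h1.elim
  case inr.inr.inl => exact h2.elim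
  case inr.inr.inr => exact Eq.trans h1 h2

lemma sup_of_seq (D : Set LP)
    (hdir : ∀ a ∈ D, ∀ b ∈ D, ∃ c ∈ D, lLE a c ∧ lLE b c)
    (w0 : Sig ⊕ Sig) (hw0 : Sum.inr w0 ∈ D) :
    ∃ s, IsSupOf lLE D s := by
  classical
  set C : Set Sig := {a | Sum.inr (Sum.inl a) ∈ D ∨ Sum.inr (Sum.inr a) ∈ D} with hC
  have memC : ∀ w : Sig ⊕ Sig, Sum.inr w ∈ D → sigOf w ∈ C := by
    intro w hw; cases w
    · exact Or.inl hw
    · exact Or.inr hw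
  have memD : ∀ a ∈ C, ∃ wa : Sig ⊕ Sig, Sum.inr wa ∈ D ∧ sigOf wa = a := by
    intro a ha
    rcases ha with h | h
    · exact ⟨Sum.inl a, h, rfl⟩
    · exact ⟨Sum.inr a, h, rfl⟩
  have hCdir : ∀ a ∈ C, ∀ b ∈ C, ∃ c ∈ C, sigLE a c ∧ sigLE b c := by
    intro a ha b hb
    obtain ⟨wa, hwa, rfl⟩ := memD a ha
    obtain ⟨wb, hwb, rfl⟩ := memD b hb
    obtain ⟨c, hc, h1, h2⟩ := hdir _ hwa _ hwb
    obtain ⟨w, rfl, hle1⟩ := seq_le_elim h1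
    obtain ⟨w', heq, hle2⟩ := seq_le_elim h2
    cases Sum.inr_injective heq
    exact ⟨sigOf w, memC w hc, hle1, hle2⟩
  have hXle : ∀ p : XP, Sum.inl p ∈ D →
      ∃ a ∈ C, ∃ m : ℕ+, p.2 = (m : WithTop ℕ+) ∧ entryGE a p.1.natPred m := by
    intro p hp
    obtain ⟨c, hc, h1, h2⟩ := hdir _ hp _ hw0
    obtain ⟨w, rfl, _⟩ := seq_le_elim h2
    obtain ⟨m, hm, hge⟩ := (lLE_inl_inr _ _).mp h1
    exact ⟨sigOf w, memC w hc, m, hm, hge⟩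
  by_cases hmax : ∃ c ∈ C, ∀ a ∈ C, sigLE a c
  · obtain ⟨c, hcC, hcm⟩ := hmax
    by_cases hB : ∃ b, Sum.inr (Sum.inr b) ∈ D
    · obtain ⟨b0, hb0⟩ := hB
      have hcD : Sum.inr (Sum.inr c) ∈ D := by
        rcases hcC with h | h
        · obtain ⟨e, he, h1, h2⟩ := hdir _ h _ hb0
          obtain ⟨b', rfl, hle2⟩ := toS'_le_elim h2
          have h1' : sigLE c b' := (lLE_toS_inr _ _).mp h1
          have hb'C : b' ∈ C := Or.inr he
          have hbc : b' = c := sigLE_antisymm (hcm b' hb'C) h1'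
          exact hbc ▸ he
        · exact h
      refine ⟨Sum.inr (Sum.inr c), ?_, fun u hu => hu _ hcD⟩
      intro d hd
      cases d with
      | inl p =>
        obtain ⟨a, haC, m, hm, hge⟩ := hXle p hd
        exact (lLE_inl_inr _ _).mpr ⟨m, hm, entryGE_mono (hcm a haC) hge⟩
      | inr w =>
        cases w with
        | inl a => exact (lLE_toS_inr _ _).mpr (hcm a (Or.inl hd))
        | inr b => exact hcm b (Or.inr hd)
    · have hcD : Sum.inr (Sum.inl c) ∈ D := by
        rcases hcC with h | h
        · exact h
        · exact absurd ⟨c, h⟩ hB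
      refine ⟨Sum.inr (Sum.inl c), ?_, fun u hu => hu _ hcD⟩
      intro d hd
      cases d with
      | inl p =>
        obtain ⟨a, haC, m, hm, hge⟩ := hXle p hd
        exact (lLE_inl_inr _ _).mpr ⟨m, hm, entryGE_mono (hcm a haC) hge⟩
      | inr w =>
        cases w with
        | inl a => exact (lLE_toS_inr _ _).mpr (hcm a (Or.inl hd))
        | inr b => exact absurd ⟨b, hd⟩ hB
  · -- no maximal element : all finite, lengths unbounded
    have hfin : ∀ a ∈ C, ∃ l, a = Sum.inl l := by
      intro a ha
      cases a with
      | inl l => exact ⟨l, rfl⟩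
      | inr f =>
        exfalso; apply hmax
        refine ⟨Sum.inr f, ha, fun b hb => ?_⟩
        obtain ⟨c, hcC, h1, h2⟩ := hCdir b hb _ ha
        cases c with
        | inl l => exact h2.elim
        | inr g =>
          have h2' : f = g := h2
          exact h2'.symm ▸ h1
    have hunb : ∀ n : ℕ, ∃ l : FinSeq, Sum.inl l ∈ C ∧ n < l.val.length := by
      by_contra hcon
      push_neg at hcon
      obtain ⟨n, hn⟩ := hcon
      apply hmax
      set S : Set ℕ := {m : ℕ | ∃ l : FinSeq, Sum.inl l ∈ C ∧ l.val.length = m} with hS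
      have hSne : S.Nonempty := by
        have h0 := memC w0 hw0
        obtain ⟨l0, hl0⟩ := hfin _ h0
        exact ⟨l0.val.length, l0, hl0 ▸ h0, rfl⟩
      have hSb : ∀ m ∈ S, m ≤ n := by rintro m ⟨l, hl, rfl⟩; exact hn l hl
      obtain ⟨l, hlC, hlen⟩ := Nat.sSup_mem hSne ⟨n, hSb⟩
      refine ⟨Sum.inl l, hlC, fun a ha => ?_⟩
      obtain ⟨la, rfl⟩ := hfin a ha
      obtain ⟨c, hcC, h1, h2⟩ := hCdir _ ha _ hlC
      obtain ⟨lc, rfl⟩ := hfin c hcC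
      have h1' : la.val <+: lc.val := h1
      have h2' : l.val <+: lc.val := h2
      have hlc : lc.val.length ≤ l.val.length := by
        rw [hlen]; exact le_csSup ⟨n, hSb⟩ ⟨lc, hcC, rfl⟩
      have hlleq : l = lc := Subtype.ext (List.IsPrefix.eq_of_length_le h2' hlc)
      show la.val <+: l.val
      rw [hlleq]
      exact h1'
    choose q hqC hqlen using hunb
    obtain ⟨f, hfdef⟩ : ∃ f : ℕ → ℕ+, ∀ i, f i = (q i).val.get ⟨i, hqlen i⟩ :=
      ⟨_, fun i => rfl⟩
    have hcons : ∀ l : FinSeq, Sum.inl l ∈ C → ∀ i, ∀ h : i < l.val.length,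
        l.val.get ⟨i, h⟩ = f i := by
      intro l hl i h
      obtain ⟨c, hcC, h1, h2⟩ := hCdir _ hl _ (hqC i)
      obtain ⟨lc, rfl⟩ := hfin c hcC
      have h1' : l.val <+: lc.val := h1
      have h2' : (q i).val <+: lc.val := h2
      rw [hfdef i]
      simp only [List.get_eq_getElem]
      rw [h1'.getElem h, h2'.getElem (hqlen i)]
    have hupS : ∀ a ∈ C, sigLE a (Sum.inr f) := by
      intro a ha
      obtain ⟨l, rfl⟩ := hfin a ha
      intro i
      exact hcons l ha i.val i.isLt
    have hupX : ∀ p : XP, Sum.inl p ∈ D →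
        ∃ m : ℕ+, p.2 = (m : WithTop ℕ+) ∧ entryGE (Sum.inr f) p.1.natPred m := by
      intro p hp
      obtain ⟨a, haC, m, hm, hge⟩ := hXle p hp
      exact ⟨m, hm, entryGE_mono (hupS a haC) hge⟩
    have key : ∀ v : Sig, (∀ i : ℕ, sigLE (Sum.inl (q i)) v) → sigLE (Sum.inr f) v := by
      intro v hv
      cases v with
      | inl lu =>
        exfalso
        have hpre : (q lu.val.length).val <+: lu.val := hv lu.val.length
        exact lt_irrefl _ ((hqlen lu.val.length).trans_le hpre.length_le)
      | inr gu =>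
        show f = gu
        funext i
        rw [hfdef i]
        exact hv i ⟨i, hqlen i⟩
    by_cases hB : ∃ b, Sum.inr (Sum.inr b) ∈ D
    · obtain ⟨b0, hb0⟩ := hB
      have hcof : ∀ a ∈ C, ∃ b, Sum.inr (Sum.inr b) ∈ D ∧ sigLE a b := by
        intro a ha
        obtain ⟨wa, hwa, rfl⟩ := memD a ha
        obtain ⟨e, he, h1, h2⟩ := hdir _ hwa _ hb0
        obtain ⟨b', rfl, _⟩ := toS'_le_elim h2
        obtain ⟨w', heq, hle⟩ := seq_le_elim h1
        cases Sum.inr_injective heq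
        exact ⟨b', he, hle⟩
      refine ⟨Sum.inr (Sum.inr (Sum.inr f)), ?_, ?_⟩
      · intro d hd
        cases d with
        | inl p => exact (lLE_inl_inr _ _).mpr (hupX p hd)
        | inr w =>
          cases w with
          | inl a => exact (lLE_toS_inr _ _).mpr (hupS a (Or.inl hd))
          | inr b => exact hupS b (Or.inr hd)
      · intro u hu
        obtain ⟨b1, rfl, _⟩ := toS'_le_elim (hu _ hb0)
        show sigLE (Sum.inr f) b1
        refine key b1 (fun i => ?_)
        obtain ⟨b, hbD, hab⟩ := hcof _ (hqC i)
        have hb1 : sigLE b b1 := hu _ hbD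
        exact sigLE_trans hab hb1
    · refine ⟨Sum.inr (Sum.inl (Sum.inr f)), ?_, ?_⟩
      · intro d hd
        cases d with
        | inl p => exact (lLE_inl_inr _ _).mpr (hupX p hd)
        | inr w =>
          cases w with
          | inl a => exact (lLE_toS_inr _ _).mpr (hupS a (Or.inl hd))
          | inr b => exact absurd ⟨b, hd⟩ hB
      · intro u hu
        obtain ⟨w', rfl, _⟩ := seq_le_elim (hu _ hw0)
        rw [lLE_toS_inr]
        have hq' : ∀ i, (Sum.inr (Sum.inl (Sum.inl (q i))) : LP) ∈ D := by
          intro i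
          rcases hqC i with h | h
          · exact h
          · exact absurd ⟨Sum.inl (q i), h⟩ hB
        refine key (sigOf w') (fun i => ?_)
        exact (lLE_toS_inr _ _).mp (hu _ (hq' i))


theorem stmt13 (D : Set LP) (hD : DirectedSet lLE D) :
    ∃ s, IsSupOf lLE D s := by
  classical
  obtain ⟨hne, hdir⟩ := hD
  by_cases hE : ∃ w : Sig ⊕ Sig, Sum.inr w ∈ D
  · obtain ⟨w0, hw0⟩ := hE
    exact sup_of_seq D hdir w0 hw0
  · refine sup_of_X D hne hdir ?_
    intro d hd
    cases d with
    | inl p => exact ⟨p, rfl⟩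
    | inr w => exact absurd ⟨w, hd⟩ hE
end

section
/- In the Scott topology on L, the set max L of maximal elements is not a G_δ-set: for any countable family {U_k : k ∈ ℕ₊} of Scott-open sets each containing max L, the intersection ⋂_k U_k contains a non-maximal element (namely some infinite sequence a ∈ Σ with a < a*). -/
theorem stmt18 (U : ℕ → Set LP)
    (hopen : ∀ k, ScottOpen lLE (U k))
    (hmax : ∀ k, {u : LP | IsMaximalEl lLE u} ⊆ U k) :
    ∃ f : ℕ → ℕ+,
      (∀ k, toS (Sum.inr f) ∈ U k) ∧ ¬ IsMaximalEl lLE (toS (Sum.inr f)) := by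
  have hsel : ∀ k : ℕ, ∃ n : ℕ+,
      toX (⟨k+1, Nat.succ_pos k⟩, ((n : ℕ+) : WithTop ℕ+)) ∈ U k := by
    intro k
    set m : ℕ+ := ⟨k+1, Nat.succ_pos k⟩ with hm
    set D : Set LP := {z | ∃ n : ℕ+, z = toX (m, ((n : ℕ+) : WithTop ℕ+))} with hD
    have hdir : DirectedSet lLE D := by
      constructor
      · exact ⟨toX (m, (1 : ℕ+)), ⟨1, rfl⟩⟩
      · rintro a ⟨n1, rfl⟩ b ⟨n2, rfl⟩
        refine ⟨toX (m, ((max n1 n2 : ℕ+) : WithTop ℕ+)), ⟨max n1 n2, rfl⟩, ?_, ?_⟩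
        · exact ⟨rfl, WithTop.coe_le_coe.mpr (le_max_left n1 n2)⟩
        · exact ⟨rfl, WithTop.coe_le_coe.mpr (le_max_right n1 n2)⟩
    have hsup : IsSupOf lLE D (toX (m, ⊤)) := by
      constructor
      · rintro a ⟨n, rfl⟩
        exact ⟨rfl, le_top⟩
      · intro u hu
        match u with
        | Sum.inl (m', n') =>
          have h1 := hu (toX (m, (1 : ℕ+))) ⟨1, rfl⟩
          obtain ⟨hmm, -⟩ := h1
          refine ⟨hmm, ?_⟩
          match n' with
          | ⊤ => exact le_top
          | (p : ℕ+) =>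
            exfalso
            have h2 := hu (toX (m, ((p+1 : ℕ+) : WithTop ℕ+))) ⟨p+1, rfl⟩
            obtain ⟨-, hle⟩ := h2
            have h3 : (p + 1 : ℕ+) ≤ p := WithTop.coe_le_coe.mp hle
            have h4 : (p : ℕ) + 1 ≤ (p : ℕ) := by exact_mod_cast h3
            omega
        | Sum.inr w =>
          exfalso
          have key : ∀ n : ℕ+, entryGE (sigOf w) m.natPred n := by
            intro n
            obtain ⟨m', hm', hent⟩ := hu (toX (m, ((n : ℕ+) : WithTop ℕ+))) ⟨n, rfl⟩
            have : (n : WithTop ℕ+) = (m' : WithTop ℕ+) := hm'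
            have hnm : n = m' := by exact_mod_cast this
            rwa [hnm]
          cases hw : sigOf w with
          | inl l =>
            by_cases hlen : m.natPred < l.val.length
            · have := key (l.val.get ⟨m.natPred, hlen⟩ + 1)
              rw [hw] at this
              obtain ⟨h, hle⟩ := this
              exact absurd hle (by simp [PNat.add_one_le_iff])
            · have := key 1
              rw [hw] at this
              obtain ⟨h, -⟩ := this
              exact hlen h
          | inr g =>
            have := key (g m.natPred + 1)
            rw [hw] at this
            exact absurd this (by simp [entryGE, PNat.add_one_le_iff])
    have hmaxEl : IsMaximalEl lLE (toX (m, ⊤)) := by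
      intro y hy
      match y with
      | Sum.inl (m', n') =>
        obtain ⟨h1, h2⟩ := hy
        have hn : n' = ⊤ := top_le_iff.mp h2
        subst hn
        have h1' : m = m' := h1
        subst h1'
        rfl
      | Sum.inr w =>
        exfalso
        obtain ⟨m', hm', -⟩ := hy
        exact (WithTop.coe_ne_top (a := m')).symm hm'
    have hU : toX (m, ⊤) ∈ U k := hmax k hmaxEl
    obtain ⟨d, hdD, hdU⟩ := (hopen k).2 D _ hdir hsup hU
    obtain ⟨n, rfl⟩ := hdD
    exact ⟨n, hdU⟩
  choose g hg using hsel
  refine ⟨g, ?_, ?_⟩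
  · intro k
    apply (hopen k).1 _ (hg k)
    exact ⟨g k, rfl, le_rfl⟩
  · intro hmaxf
    have hle : lLE (toS (Sum.inr g)) (toS' (Sum.inr g)) := by
      exact rfl
    have := hmaxf (toS' (Sum.inr g)) hle
    simp [toS, toS'] at this
end

section
/- There exists an ω-algebraic domain P such that the set Max(P) of maximal elements of P is not a G_δ-subset of the Scott space of P. -/
namespace Stmt19

/-! ### The poset of compact tokens -/

abbrev K := List Bool ⊕ List Bool

def ones (s : List Bool) : ℕ := s.count true

/-- Order on tokens. -/
def kle : K → K → Prop
  | Sum.inl s, Sum.inl t => s <+: t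
  | Sum.inl s, Sum.inr t => s <+: t
  | Sum.inr s, Sum.inr t => s = t ∨ (s <+: t ∧ ones s < ones t)
  | Sum.inr _, Sum.inl _ => False

lemma kle_refl (a : K) : kle a a := by
  cases a with
  | inl s => exact List.prefix_refl s
  | inr s => exact Or.inl rfl

lemma kle_trans {a b c : K} (h1 : kle a b) (h2 : kle b c) : kle a c := by
  cases a with
  | inl s =>
    cases b with
    | inl t =>
      cases c with
      | inl u => exact h1.trans h2
      | inr u => exact h1.trans h2
    | inr t =>
      cases c with
      | inl u => exact absurd h2 id
      | inr u =>
        rcases h2 with rfl | ⟨h2, _⟩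
        · exact h1
        · exact List.IsPrefix.trans h1 h2
  | inr s =>
    cases b with
    | inl t => exact absurd h1 id
    | inr t =>
      cases c with
      | inl u => exact absurd h2 id
      | inr u =>
        rcases h1 with rfl | ⟨h1, h1'⟩
        · exact h2
        · rcases h2 with rfl | ⟨h2, h2'⟩
          · exact Or.inr ⟨h1, h1'⟩
          · exact Or.inr ⟨h1.trans h2, h1'.trans h2'⟩

/-! ### Ideals -/

def IsIdeal (I : Set K) : Prop :=
  I.Nonempty ∧ (∀ a b, kle a b → b ∈ I → a ∈ I) ∧
    (∀ a ∈ I, ∀ b ∈ I, ∃ c ∈ I, kle a c ∧ kle b c)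

def P : Type := {I : Set K // IsIdeal I}

def rr (I J : P) : Prop := I.1 ⊆ J.1

/-- Principal ideal. -/
def pid (k : K) : P :=
  ⟨{a | kle a k}, ⟨k, kle_refl k⟩, fun a b hab hb => kle_trans hab hb,
    fun a ha b hb => ⟨k, kle_refl k, ha, hb⟩⟩

lemma pid_mem_self (k : K) : k ∈ (pid k).1 := kle_refl k

lemma pid_subset {k : K} {I : P} (hk : k ∈ I.1) : (pid k).1 ⊆ I.1 :=
  fun a ha => I.2.2.1 a k ha hk

/-- Union of a directed set of ideals is an ideal. -/
lemma union_ideal {D : Set P} (hD : DirectedSet rr D) :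
    IsIdeal {a : K | ∃ I ∈ D, a ∈ I.1} := by
  obtain ⟨⟨I0, hI0⟩, hdir⟩ := hD
  refine ⟨⟨I0.2.1.choose, I0, hI0, I0.2.1.choose_spec⟩, ?_, ?_⟩
  · rintro a b hab ⟨I, hI, hbI⟩
    exact ⟨I, hI, I.2.2.1 a b hab hbI⟩
  · rintro a ⟨I, hI, haI⟩ b ⟨J, hJ, hbJ⟩
    obtain ⟨M, hM, hIM, hJM⟩ := hdir I hI J hJ
    obtain ⟨c, hc, hac, hbc⟩ := M.2.2.2 a (hIM haI) b (hJM hbJ)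
    exact ⟨c, ⟨M, hM, hc⟩, hac, hbc⟩

lemma sup_is_union {D : Set P} (hD : DirectedSet rr D) :
    IsSupOf rr D ⟨_, union_ideal hD⟩ :=
  ⟨fun I hI a ha => ⟨I, hI, ha⟩, fun u hu a ⟨I, hI, haI⟩ => hu I hI haI⟩

lemma sup_eq_union {D : Set P} (hD : DirectedSet rr D) {s : P}
    (hs : IsSupOf rr D s) : s.1 = {a : K | ∃ I ∈ D, a ∈ I.1} := by
  apply Set.Subset.antisymm
  · exact hs.2 ⟨_, union_ideal hD⟩ (sup_is_union hD).1
  · exact (sup_is_union hD).2 s hs.1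

lemma pid_compact (k : K) : IsCompactEl rr (pid k) := by
  intro D s hD hs hcs
  have hk : k ∈ s.1 := hcs (pid_mem_self k)
  rw [sup_eq_union hD hs] at hk
  obtain ⟨I, hI, hkI⟩ := hk
  exact ⟨I, hI, pid_subset hkI⟩

lemma compact_eq_pid {c : P} (hc : IsCompactEl rr c) : ∃ k ∈ c.1, c = pid k := by
  classical
  set D : Set P := {p | ∃ k ∈ c.1, p = pid k} with hDdef
  have hD : DirectedSet rr D := by
    refine ⟨⟨pid c.2.1.choose, c.2.1.choose, c.2.1.choose_spec, rfl⟩, ?_⟩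
    rintro _ ⟨a, ha, rfl⟩ _ ⟨b, hb, rfl⟩
    obtain ⟨e, he, hae, hbe⟩ := c.2.2.2 a ha b hb
    exact ⟨pid e, ⟨e, he, rfl⟩, fun z hz => kle_trans hz hae, fun z hz => kle_trans hz hbe⟩
  have hsup : IsSupOf rr D c := by
    constructor
    · rintro _ ⟨k, hk, rfl⟩; exact pid_subset hk
    · intro u hu a ha
      exact hu (pid a) ⟨a, ha, rfl⟩ (pid_mem_self a)
  obtain ⟨d, hd, hcd⟩ := hc D c hD hsup (fun a ha => ha)
  obtain ⟨k, hk, rfl⟩ := hd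
  refine ⟨k, hk, ?_⟩
  apply Subtype.ext
  exact Set.Subset.antisymm hcd (pid_subset hk)

/-! ### Finite initial segments of infinite sequences -/

def seg (x : ℕ → Bool) (n : ℕ) : List Bool := (List.range n).map x

lemma seg_length (x : ℕ → Bool) (n : ℕ) : (seg x n).length = n := by
  simp [seg]

lemma seg_prefix (x : ℕ → Bool) {n m : ℕ} (h : n ≤ m) : seg x n <+: seg x m := by
  have : List.range n <+: List.range m := by
    have := List.take_prefix n (List.range m)
    rwa [List.take_range, min_eq_left h] at this
  exact this.map x

lemma prefix_seg {x : ℕ → Bool} {t : List Bool} {n : ℕ} (h : t <+: seg x n) :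
    t = seg x t.length := by
  have hlen : t.length ≤ n := by
    have := h.length_le; rwa [seg_length] at this
  have h2 : t <+: seg x t.length :=
    List.prefix_of_prefix_length_le h (seg_prefix x hlen) (by rw [seg_length])
  exact h2.eq_of_length (by rw [seg_length])

lemma seg_succ (x : ℕ → Bool) (n : ℕ) : seg x (n+1) = seg x n ++ [x n] := by
  simp [seg, List.range_succ]

lemma seg_congr {x y : ℕ → Bool} {n : ℕ} (h : ∀ i < n, x i = y i) :
    seg x n = seg y n := by
  apply List.map_congr_left
  intro a ha
  exact h a (List.mem_range.mp ha)

lemma ones_mono {s t : List Bool} (h : s <+: t) : ones s ≤ ones t :=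
  h.count_le true

lemma ones_seg_succ_true {x : ℕ → Bool} {n : ℕ} (h : x n = true) :
    ones (seg x (n+1)) = ones (seg x n) + 1 := by
  rw [seg_succ, ones, List.count_append, h]
  simp [ones]

lemma ones_seg_succ_false {x : ℕ → Bool} {n : ℕ} (h : x n = false) :
    ones (seg x (n+1)) = ones (seg x n) := by
  rw [seg_succ, ones, List.count_append, h]
  simp [ones]

/-- If `x` has a `true` beyond every bound, `ones (seg x ·)` is unbounded. -/
lemma ones_unbounded {x : ℕ → Bool} (hx : ∀ N, ∃ i ≥ N, x i = true) :
    ∀ N, ∃ m, N < ones (seg x m) := by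
  intro N
  induction N with
  | zero =>
    obtain ⟨i, _, hi⟩ := hx 0
    exact ⟨i + 1, by rw [ones_seg_succ_true hi]; omega⟩
  | succ N ih =>
    obtain ⟨m, hm⟩ := ih
    obtain ⟨i, hiN, hi⟩ := hx m
    refine ⟨i + 1, ?_⟩
    have h1 : ones (seg x m) ≤ ones (seg x i) := ones_mono (seg_prefix x hiN)
    rw [ones_seg_succ_true hi]
    omega

/-- If `x` is eventually false then `ones (seg x ·)` is bounded. -/
lemma ones_bounded {x : ℕ → Bool} {N : ℕ} (hx : ∀ i ≥ N, x i = false) :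
    ∀ m, ones (seg x m) ≤ ones (seg x N) := by
  intro m
  rcases le_or_gt m N with h | h
  · exact ones_mono (seg_prefix x h)
  · have : ∀ k, ones (seg x (N + k)) = ones (seg x N) := by
      intro k
      induction k with
      | zero => rfl
      | succ k ih =>
        have : x (N + k) = false := hx _ (by omega)
        rw [show N + (k+1) = (N + k) + 1 by omega, ones_seg_succ_false this, ih]
    have := this (m - N)
    rw [show N + (m - N) = m by omega] at this
    omega

/-! ### The ideals `Ix` and `Jx` -/

def IxSet (x : ℕ → Bool) : Set K := {a | ∃ n, a = Sum.inl (seg x n)}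

lemma IxSet_ideal (x : ℕ → Bool) : IsIdeal (IxSet x) := by
  refine ⟨⟨Sum.inl (seg x 0), 0, rfl⟩, ?_, ?_⟩
  · rintro a b hab ⟨n, rfl⟩
    cases a with
    | inl t =>
      have : t <+: seg x n := hab
      exact ⟨t.length, by rw [← prefix_seg this]⟩
    | inr t => exact absurd hab id
  · rintro _ ⟨n, rfl⟩ _ ⟨m, rfl⟩
    refine ⟨Sum.inl (seg x (max n m)), ⟨max n m, rfl⟩, ?_, ?_⟩
    · exact seg_prefix x (le_max_left n m)
    · exact seg_prefix x (le_max_right n m)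

def Ix (x : ℕ → Bool) : P := ⟨IxSet x, IxSet_ideal x⟩

def JxSet (x : ℕ → Bool) : Set K :=
  {a | ∃ n, a = Sum.inl (seg x n) ∨ a = Sum.inr (seg x n)}

lemma Jx_ideal {x : ℕ → Bool} (hx : ∀ N, ∃ m, N < ones (seg x m)) :
    IsIdeal (JxSet x) := by
  have key : ∀ n m : ℕ, ∃ u, (∃ p, u = seg x p) ∧ seg x n <+: u ∧ seg x m <+: u ∧
      ones (seg x n) < ones u ∧ ones (seg x m) < ones u := by
    intro n m
    obtain ⟨p, hp⟩ := hx (max (ones (seg x n)) (ones (seg x m)))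
    refine ⟨seg x (max p (max n m)), ⟨_, rfl⟩, seg_prefix x (by omega), seg_prefix x (by omega), ?_, ?_⟩
    · have := ones_mono (seg_prefix x (le_max_left p (max n m)))
      omega
    · have := ones_mono (seg_prefix x (le_max_left p (max n m)))
      omega
  refine ⟨⟨Sum.inl (seg x 0), 0, Or.inl rfl⟩, ?_, ?_⟩
  · rintro a b hab ⟨n, rfl | rfl⟩
    · cases a with
      | inl t =>
        have : t <+: seg x n := hab
        exact ⟨t.length, Or.inl (by rw [← prefix_seg this])⟩
      | inr t => exact absurd hab id
    · cases a with
      | inl t =>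
        have : t <+: seg x n := hab
        exact ⟨t.length, Or.inl (by rw [← prefix_seg this])⟩
      | inr t =>
        rcases hab with rfl | ⟨h1, _⟩
        · exact ⟨n, Or.inr rfl⟩
        · exact ⟨t.length, Or.inr (by rw [← prefix_seg h1])⟩
  · rintro _ ⟨n, rfl | rfl⟩ _ ⟨m, rfl | rfl⟩ <;>
      obtain ⟨u, ⟨p, rfl⟩, h1, h2, h3, h4⟩ := key n m
    · exact ⟨Sum.inl (seg x (max n m)), ⟨max n m, Or.inl rfl⟩,
        seg_prefix x (le_max_left n m), seg_prefix x (le_max_right n m)⟩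
    · exact ⟨Sum.inr (seg x p), ⟨p, Or.inr rfl⟩, h1, Or.inr ⟨h2, h4⟩⟩
    · exact ⟨Sum.inr (seg x p), ⟨p, Or.inr rfl⟩, Or.inr ⟨h1, h3⟩, h2⟩
    · exact ⟨Sum.inr (seg x p), ⟨p, Or.inr rfl⟩, Or.inr ⟨h1, h3⟩, Or.inr ⟨h2, h4⟩⟩

/-- Two prefixes of a common list, the shorter is a prefix of the longer. -/
lemma eq_seg_of_common_upper {x : ℕ → Bool} {t u : List Bool}
    (h1 : t <+: u) (h2 : seg x t.length <+: u) : t = seg x t.length := by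
  have h3 : t <+: seg x t.length :=
    List.prefix_of_prefix_length_le h1 h2 (by rw [seg_length])
  exact h3.eq_of_length (by rw [seg_length])

/-- For eventually false `x`, `Ix x` is maximal. -/
lemma Ix_maximal {x : ℕ → Bool} {N : ℕ} (hx : ∀ i ≥ N, x i = false) :
    IsMaximalEl rr (Ix x) := by
  intro J hJ
  have hinl : ∀ t : List Bool, Sum.inl t ∈ J.1 → t = seg x t.length := by
    intro t ht
    have hs : Sum.inl (seg x t.length) ∈ J.1 := hJ ⟨t.length, rfl⟩
    obtain ⟨c, _, h1, h2⟩ := J.2.2.2 _ ht _ hs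
    cases c with
    | inl u => exact eq_seg_of_common_upper h1 h2
    | inr u => exact eq_seg_of_common_upper h1 h2
  have hinr : ∀ t : List Bool, Sum.inr t ∈ J.1 → t = seg x t.length := by
    intro t ht
    have hs : Sum.inl (seg x t.length) ∈ J.1 := hJ ⟨t.length, rfl⟩
    obtain ⟨c, _, h1, h2⟩ := J.2.2.2 _ ht _ hs
    cases c with
    | inl u => exact absurd h1 id
    | inr u =>
      have h2 : seg x t.length <+: u := h2
      rcases h1 with rfl | ⟨h1, _⟩
      · exact (h2.eq_of_length (by rw [seg_length])).symm
      · exact eq_seg_of_common_upper h1 h2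
  have hstep : ∀ t : List Bool, Sum.inr t ∈ J.1 →
      ∃ t', Sum.inr t' ∈ J.1 ∧ ones t < ones t' := by
    intro t ht
    have hs : Sum.inl (seg x (t.length + 1)) ∈ J.1 := hJ ⟨t.length + 1, rfl⟩
    obtain ⟨c, hc, h1, h2⟩ := J.2.2.2 _ ht _ hs
    cases c with
    | inl u => exact absurd h1 id
    | inr u =>
      have h2 : seg x (t.length + 1) <+: u := h2
      rcases h1 with rfl | ⟨_, h1'⟩
      · exfalso
        have := h2.length_le
        rw [seg_length] at this
        omega
      · exact ⟨u, hc, h1'⟩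
  have hiter : ∀ k : ℕ, ∀ t : List Bool, Sum.inr t ∈ J.1 →
      ∃ t', Sum.inr t' ∈ J.1 ∧ k ≤ ones t' := by
    intro k
    induction k with
    | zero => exact fun t ht => ⟨t, ht, Nat.zero_le _⟩
    | succ k ih =>
      intro t ht
      obtain ⟨t', ht', hk⟩ := ih t ht
      obtain ⟨t'', ht'', hlt⟩ := hstep t' ht'
      exact ⟨t'', ht'', by omega⟩
  have hnoinr : ∀ t : List Bool, Sum.inr t ∉ J.1 := by
    intro t ht
    obtain ⟨t', ht', hk⟩ := hiter (ones (seg x N) + 1) t ht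
    have h1 : t' = seg x t'.length := hinr t' ht'
    have h2 : ones t' ≤ ones (seg x N) := by
      rw [h1]; exact ones_bounded hx t'.length
    omega
  apply Subtype.ext
  apply Set.Subset.antisymm
  · intro a ha
    cases a with
    | inl t => exact ⟨t.length, by rw [← hinl t ha]⟩
    | inr t => exact absurd ha (hnoinr t)
  · exact hJ

/-- For `x` with unboundedly many `true`s, `Ix x` is not maximal. -/
lemma Ix_not_maximal {x : ℕ → Bool} (hx : ∀ N, ∃ m, N < ones (seg x m)) :
    ¬ IsMaximalEl rr (Ix x) := by
  intro hmax
  have hsub : rr (Ix x) ⟨JxSet x, Jx_ideal hx⟩ := by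
    rintro a ⟨n, rfl⟩; exact ⟨n, Or.inl rfl⟩
  have heq : JxSet x = IxSet x := congrArg Subtype.val (hmax _ hsub)
  have hmem : Sum.inr (seg x 0) ∈ JxSet x := ⟨0, Or.inr rfl⟩
  rw [heq] at hmem
  obtain ⟨n, hn⟩ := hmem
  exact absurd hn (by simp)

/-! ### Diagonalization -/

/-- Recursive construction of the diagonal sequence. `w n y` is a modulus of
openness for `y` in the `n`-th open set. -/
noncomputable def diagF (w : ℕ → (ℕ → Bool) → ℕ) : ℕ → (ℕ → Bool) × ℕ
  | 0 => (fun _ => false, w 0 (fun _ => false) + 1)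
  | n+1 =>
    let p := diagF w n
    let y : ℕ → Bool := fun i => if i < p.2 then p.1 i else decide (i = p.2)
    (y, max (w (n+1) y) (p.2 + 1))

lemma diagF_succ_fst (w : ℕ → (ℕ → Bool) → ℕ) (n : ℕ) :
    (diagF w (n+1)).1 = fun i =>
      if i < (diagF w n).2 then (diagF w n).1 i else decide (i = (diagF w n).2) := rfl

lemma diagF_snd_lt (w : ℕ → (ℕ → Bool) → ℕ) (n : ℕ) :
    (diagF w n).2 < (diagF w (n+1)).2 := by
  have : (diagF w (n+1)).2 = max (w (n+1) (diagF w (n+1)).1) ((diagF w n).2 + 1) := rfl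
  omega

lemma diagF_snd_mono (w : ℕ → (ℕ → Bool) → ℕ) {n k : ℕ} (h : n ≤ k) :
    (diagF w n).2 ≤ (diagF w k).2 := by
  induction k with
  | zero =>
    have : n = 0 := by omega
    subst this; exact le_refl _
  | succ k ih =>
    rcases Nat.lt_or_ge n (k+1) with h' | h'
    · exact le_trans (ih (by omega)) (le_of_lt (diagF_snd_lt w k))
    · have : n = k + 1 := by omega
      subst this; exact le_refl _

lemma diagF_snd_gt (w : ℕ → (ℕ → Bool) → ℕ) (n : ℕ) : n < (diagF w n).2 := by
  induction n with
  | zero => simp [diagF]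
  | succ n ih => have := diagF_snd_lt w n; omega

lemma diagF_snd_ge_w (w : ℕ → (ℕ → Bool) → ℕ) (n : ℕ) :
    w n (diagF w n).1 ≤ (diagF w n).2 := by
  cases n with
  | zero => exact Nat.le_succ _
  | succ n => exact le_max_left _ _

lemma diagF_evfalse (w : ℕ → (ℕ → Bool) → ℕ) (n : ℕ) :
    ∀ i ≥ (diagF w n).2, (diagF w n).1 i = false := by
  cases n with
  | zero => intro i _; rfl
  | succ n =>
    intro i hi
    have hlt := diagF_snd_lt w n
    rw [diagF_succ_fst]
    have h1 : ¬ i < (diagF w n).2 := by omega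
    have h2 : i ≠ (diagF w n).2 := by omega
    simp [h1, h2]

lemma diagF_agree (w : ℕ → (ℕ → Bool) → ℕ) {n k : ℕ} (h : n ≤ k) :
    ∀ i < (diagF w n).2, (diagF w k).1 i = (diagF w n).1 i := by
  induction k with
  | zero =>
    have : n = 0 := by omega
    subst this; intro i _; rfl
  | succ k ih =>
    rcases Nat.lt_or_ge n (k+1) with h' | h'
    · intro i hi
      have hk : i < (diagF w k).2 := lt_of_lt_of_le hi (diagF_snd_mono w (by omega))
      rw [diagF_succ_fst]
      simp only [hk, if_pos]
      exact ih (by omega) i hi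
    · have : n = k + 1 := by omega
      subst this; intro i _; rfl

/-- The diagonal sequence. -/
noncomputable def diagX (w : ℕ → (ℕ → Bool) → ℕ) : ℕ → Bool :=
  fun i => (diagF w i).1 i

lemma diagX_val (w : ℕ → (ℕ → Bool) → ℕ) (n : ℕ) :
    ∀ i < (diagF w n).2, diagX w i = (diagF w n).1 i := by
  intro i hi
  rcases le_or_gt n i with h | h
  · exact diagF_agree w h i hi
  · have : (diagF w n).1 i = (diagF w i).1 i :=
      diagF_agree w (le_of_lt h) i (diagF_snd_gt w i)
    rw [diagX, this]

lemma diagX_true (w : ℕ → (ℕ → Bool) → ℕ) (n : ℕ) :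
    diagX w ((diagF w n).2) = true := by
  rw [diagX_val w (n+1) _ (diagF_snd_lt w n), diagF_succ_fst]
  simp

lemma diagonal (S : ℕ → Set (ℕ → Bool))
    (hopen : ∀ n, ∀ y ∈ S n, ∃ m, ∀ z : ℕ → Bool, (∀ i < m, z i = y i) → z ∈ S n)
    (hA : ∀ n, ∀ y : ℕ → Bool, (∃ N, ∀ i ≥ N, y i = false) → y ∈ S n) :
    ∃ x : ℕ → Bool, (∀ n, x ∈ S n) ∧ ∀ N, ∃ i ≥ N, x i = true := by
  classical
  set w : ℕ → (ℕ → Bool) → ℕ := fun n y =>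
    if h : y ∈ S n then Classical.choose (hopen n y h) else 0 with hw
  have hwspec : ∀ n y (h : y ∈ S n), ∀ z : ℕ → Bool,
      (∀ i < w n y, z i = y i) → z ∈ S n := by
    intro n y h z hz
    rw [hw] at hz
    simp only [dif_pos h] at hz
    exact Classical.choose_spec (hopen n y h) z hz
  have hmem : ∀ n, (diagF w n).1 ∈ S n := by
    intro n
    exact hA n _ ⟨(diagF w n).2, diagF_evfalse w n⟩
  refine ⟨diagX w, ?_, ?_⟩
  · intro n
    refine hwspec n (diagF w n).1 (hmem n) _ ?_
    intro i hi
    exact diagX_val w n i (lt_of_lt_of_le hi (diagF_snd_ge_w w n))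
  · intro N
    refine ⟨(diagF w N).2, ?_, diagX_true w N⟩
    exact le_of_lt (diagF_snd_gt w N)

/-! ### Trace of Scott opens on sequences -/

lemma trace_open {U : Set P} (hU : ScottOpen rr U) {x : ℕ → Bool} (hx : Ix x ∈ U) :
    ∃ m, ∀ y : ℕ → Bool, (∀ i < m, y i = x i) → Ix y ∈ U := by
  set D : Set P := Set.range (fun n => pid (Sum.inl (seg x n))) with hD
  have hdir : DirectedSet rr D := by
    refine ⟨⟨_, ⟨0, rfl⟩⟩, ?_⟩
    rintro _ ⟨n, rfl⟩ _ ⟨m, rfl⟩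
    refine ⟨pid (Sum.inl (seg x (max n m))), ⟨max n m, rfl⟩, ?_, ?_⟩
    · exact fun z hz => kle_trans hz (seg_prefix x (le_max_left n m))
    · exact fun z hz => kle_trans hz (seg_prefix x (le_max_right n m))
  have hsup : IsSupOf rr D (Ix x) := by
    constructor
    · rintro _ ⟨n, rfl⟩ z hz
      exact (Ix x).2.2.1 z (Sum.inl (seg x n)) hz ⟨n, rfl⟩
    · rintro u hu a ⟨n, rfl⟩
      exact hu (pid (Sum.inl (seg x n))) ⟨n, rfl⟩ (pid_mem_self _)
  obtain ⟨d, hdD, hdU⟩ := hU.2 D (Ix x) hdir hsup hx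
  obtain ⟨n, rfl⟩ := hdD
  refine ⟨n, fun y hy => ?_⟩
  have hseg : seg y n = seg x n := seg_congr hy
  refine hU.1 _ hdU (Ix y) ?_
  intro z hz
  have hz : kle z (Sum.inl (seg y n)) := by rwa [hseg]
  exact (Ix y).2.2.1 z (Sum.inl (seg y n)) hz ⟨n, rfl⟩

end Stmt19

theorem stmt19 :
    ∃ (P : Type) (r : P → P → Prop),
      Reflexive r ∧ Transitive r ∧ AntiSymmetric r ∧
      (∀ D : Set P, DirectedSet r D → ∃ s, IsSupOf r D s) ∧
      (∀ x : P,
        DirectedSet r {c | IsCompactEl r c ∧ r c x} ∧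
        IsSupOf r {c | IsCompactEl r c ∧ r c x} x) ∧
      {c : P | IsCompactEl r c}.Countable ∧
      ¬ ∃ U : ℕ → Set P, (∀ n, ScottOpen r (U n)) ∧
          {x : P | IsMaximalEl r x} = ⋂ n, U n := by
  refine ⟨Stmt19.P, Stmt19.rr, ?_, ?_, ?_, ?_, ?_, ?_, ?_⟩
  · exact fun I => Set.Subset.refl I.1
  · intro a b c h1 h2
    exact Set.Subset.trans h1 h2
  · exact fun I J h1 h2 => Subtype.ext (Set.Subset.antisymm h1 h2)
  · exact fun D hD => ⟨_, Stmt19.sup_is_union hD⟩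
  · intro I
    have hdir : DirectedSet Stmt19.rr {c | IsCompactEl Stmt19.rr c ∧ Stmt19.rr c I} := by
      constructor
      · obtain ⟨k0, hk0⟩ := I.2.1
        exact ⟨Stmt19.pid k0, Stmt19.pid_compact k0, Stmt19.pid_subset hk0⟩
      · rintro a ⟨hac, haI⟩ b ⟨hbc, hbI⟩
        obtain ⟨k, hk, rfl⟩ := Stmt19.compact_eq_pid hac
        obtain ⟨k', hk', rfl⟩ := Stmt19.compact_eq_pid hbc
        obtain ⟨e, he, hke, hk'e⟩ := I.2.2.2 k (haI hk) k' (hbI hk')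
        refine ⟨Stmt19.pid e, ⟨Stmt19.pid_compact e, Stmt19.pid_subset he⟩, ?_, ?_⟩
        · exact fun z hz => Stmt19.kle_trans hz hke
        · exact fun z hz => Stmt19.kle_trans hz hk'e
    refine ⟨hdir, ?_, ?_⟩
    · exact fun c hc => hc.2
    · intro u hu a ha
      exact hu (Stmt19.pid a) ⟨Stmt19.pid_compact a, Stmt19.pid_subset ha⟩
        (Stmt19.pid_mem_self a)
  · have hsub : {c : Stmt19.P | IsCompactEl Stmt19.rr c} ⊆ Set.range Stmt19.pid := by
      intro c hc
      obtain ⟨k, _, rfl⟩ := Stmt19.compact_eq_pid hc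
      exact ⟨k, rfl⟩
    exact (Set.countable_range Stmt19.pid).mono hsub
  · rintro ⟨U, hU, hMax⟩
    set S : ℕ → Set (ℕ → Bool) := fun n => {y | Stmt19.Ix y ∈ U n} with hS
    have hopen : ∀ n, ∀ y ∈ S n, ∃ m, ∀ z : ℕ → Bool,
        (∀ i < m, z i = y i) → z ∈ S n := by
      intro n y hy
      obtain ⟨m, hm⟩ := Stmt19.trace_open (hU n) hy
      exact ⟨m, fun z hz => hm z hz⟩
    have hA : ∀ n, ∀ y : ℕ → Bool, (∃ N, ∀ i ≥ N, y i = false) → y ∈ S n := by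
      rintro n y ⟨N, hN⟩
      have hmax : IsMaximalEl Stmt19.rr (Stmt19.Ix y) := Stmt19.Ix_maximal hN
      have : Stmt19.Ix y ∈ ⋂ n, U n := by
        rw [← hMax]; exact hmax
      exact Set.mem_iInter.mp this n
    obtain ⟨x, hxS, hxT⟩ := Stmt19.diagonal S hopen hA
    have hIx : Stmt19.Ix x ∈ {p : Stmt19.P | IsMaximalEl Stmt19.rr p} := by
      rw [hMax]
      exact Set.mem_iInter.mpr fun n => hxS n
    exact Stmt19.Ix_not_maximal (Stmt19.ones_unbounded hxT) hIx
end
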